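/- Let (H, (Uᵗ)_{t∈ℤ}, D) be a smooth discrete-time quantum walk and ξ a smooth unit vector. With p_t the rescaled position distribution at time t, for every positive integer m one has limsup_{t→∞} | ∫ vᵐ p_t(dv) | ≤ ‖[D, U]‖ᵐ. -/

import Mathlib

set_option maxHeartbeats 1000000

open scoped InnerProductSpace
open MeasureTheory Filter

lemma aux_pow_succ_le (t m : ℕ) : t^(m+1) + (m+1)*t^m ≤ (t+1)^(m+1) := by
  induction m with
  | zero => simp [pow_succ]
  | succ m ih =>
    have h : (t+1)^(m+2) = (t+1)^(m+1) * (t+1) := by ring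
    have h2 : (t^(m+1) + (m+1)*t^m) * (t+1) ≤ (t+1)^(m+1) * (t+1) :=
      Nat.mul_le_mul_right _ ih
    calc t^(m+2) + (m+2)*t^(m+1)
        ≤ (t^(m+1) + (m+1)*t^m) * (t+1) := by ring_nf; nlinarith [Nat.zero_le (t^m)]
      _ ≤ (t+1)^(m+2) := by rw [h]; exact h2

lemma aux_sum_pow_le (t m : ℕ) : (m+1) * ∑ s ∈ Finset.range t, s^m ≤ t^(m+1) := by
  induction t with
  | zero => simp
  | succ t ih =>
    rw [Finset.sum_range_succ, Nat.mul_add]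
    calc (m+1) * ∑ s ∈ Finset.range t, s^m + (m+1)*t^m
        ≤ t^(m+1) + (m+1)*t^m := by omega
      _ ≤ (t+1)^(m+1) := aux_pow_succ_le t m

lemma pascal_shuffle {H : Type*} [AddCommGroup H] [Module ℂ H] (f : ℕ → ℕ → H) (m : ℕ) :
    ∑ k ∈ Finset.range (m+1), (m.choose k : ℂ) • (f (k+1) (m-k) + f k (m-k+1))
    = ∑ k ∈ Finset.range (m+2), ((m+1).choose k : ℂ) • f k (m+1-k) := by
  have h1 : ∑ k ∈ Finset.range (m+1), (m.choose k : ℂ) • f k (m-k+1)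
      = (∑ k ∈ Finset.range (m+1), (m.choose (k+1) : ℂ) • f (k+1) (m-k)) + f 0 (m+1) := by
    rw [Finset.sum_range_succ' (fun k => (m.choose k : ℂ) • f k (m-k+1)) m]
    congr 1
    · rw [Finset.sum_range_succ]
      have hz : (m.choose (m+1) : ℂ) = 0 := by
        simp [Nat.choose_succ_self]
      rw [hz, zero_smul, add_zero]
      apply Finset.sum_congr rfl
      intro k hk
      have hk' : k < m := Finset.mem_range.mp hk
      have he : m - (k+1) + 1 = m - k := by omega
      rw [he]
    · simp
  have h2 : ∑ k ∈ Finset.range (m+2), ((m+1).choose k : ℂ) • f k (m+1-k)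
      = (∑ k ∈ Finset.range (m+1),
          ((m.choose k : ℂ) • f (k+1) (m-k) + (m.choose (k+1) : ℂ) • f (k+1) (m-k)))
        + f 0 (m+1) := by
    rw [Finset.sum_range_succ' (fun k => (((m+1).choose k : ℂ)) • f k (m+1-k)) (m+1)]
    congr 1
    · apply Finset.sum_congr rfl
      intro k hk
      have he : m + 1 - (k+1) = m - k := by omega
      rw [he, Nat.choose_succ_succ, Nat.cast_add, add_smul]
    · simp
  simp only [smul_add, Finset.exists_ne_map_eq_of_card_lt_of_maps_to, Finset.sum_add_distrib] at *
  rw [h1, h2]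
  abel

theorem limsup_moment_le_commutator_norm_pow
    {H : Type*} [NormedAddCommGroup H] [InnerProductSpace ℂ H] [CompleteSpace H]
    (D : H →ₗ.[ℂ] H) (hD : IsSelfAdjoint D)
    (U : H →L[ℂ] H) (hU : U ∈ unitary (H →L[ℂ] H))
    -- smoothness of the walk: the iterated commutators are bounded operators
    (u : ℕ → (H →L[ℂ] H)) (hu0 : u 0 = U)
    (hu : ∀ (m : ℕ) (ξ : D.domain), ∃ h : u m (ξ : H) ∈ D.domain,
      u (m + 1) (ξ : H) = D ⟨u m (ξ : H), h⟩ - u m (D ξ))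
    (ξ : H) (hξ : ‖ξ‖ = 1)
    -- smoothness of `ξ`: the vectors `c t m = Dᵐ Uᵗ ξ` exist
    (c : ℕ → ℕ → H)
    (hc0 : ∀ t : ℕ, c t 0 = (U ^ t) ξ)
    (hc : ∀ t m : ℕ, ∃ h : c t m ∈ D.domain, c t (m + 1) = D ⟨c t m, h⟩)
    -- the rescaled position distributions and their moments
    (p : ℕ → Measure ℝ)
    (hp : ∀ t, IsProbabilityMeasure (p t))
    (hpint : ∀ t m : ℕ, Integrable (fun v : ℝ => v ^ m) (p t))
    (hmom : ∀ t m : ℕ, 0 < t → ∫ v, v ^ m ∂(p t) =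
      (⟪(((t : ℝ) ^ m)⁻¹ : ℝ) • c t m, (U ^ t) ξ⟫_ℂ).re)
    (m : ℕ) (hm : 0 < m) :
    Filter.limsup (fun t : ℕ => |∫ v, v ^ m ∂(p t)|) atTop ≤ ‖u 1‖ ^ m := by
  have hdom : ∀ t m, c t m ∈ D.domain := fun t m => (hc t m).1
  have hstep : ∀ t m, c t (m+1) = D ⟨c t m, hdom t m⟩ := fun t m => (hc t m).2
  have udom : ∀ (k : ℕ) (x : H) (hx : x ∈ D.domain), u k x ∈ D.domain :=
    fun k x hx => (hu k ⟨x, hx⟩).1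
  have huD : ∀ (k : ℕ) (x : H) (hx : x ∈ D.domain) (hx' : u k x ∈ D.domain),
      D ⟨u k x, hx'⟩ = u (k+1) x + u k (D ⟨x, hx⟩) := by
    intro k x hx hx'
    obtain ⟨h, e⟩ := hu k ⟨x, hx⟩
    have h2 : D ⟨u k x, hx'⟩ = D ⟨u k x, h⟩ := rfl
    rw [h2]
    exact sub_eq_iff_eq_add.mp e.symm
  -- the Leibniz formula for iterated commutators
  have leib : ∀ t mm, c (t+1) mm
      = ∑ k ∈ Finset.range (mm+1), ((mm.choose k : ℂ)) • u k (c t (mm-k)) := by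
    intro t mm
    induction mm with
    | zero => simp [hc0, hu0, pow_succ']
    | succ mm ih =>
      set y : ℕ → D.domain := fun k =>
        (mm.choose k : ℂ) • (⟨u k (c t (mm-k)), udom k _ (hdom t (mm-k))⟩ : D.domain) with hydef
      have hsum : (⟨c (t+1) mm, hdom (t+1) mm⟩ : D.domain) = ∑ k ∈ Finset.range (mm+1), y k := by
        apply Subtype.ext
        rw [AddSubmonoidClass.coe_finset_sum]
        simpa [hydef] using ih
      have hDy : ∀ k, D (y k) =
          (mm.choose k : ℂ) • (u (k+1) (c t (mm-k)) + u k (c t (mm-k+1))) := by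
        intro k
        rw [hydef]
        simp only
        rw [D.map_smul]
        congr 1
        rw [huD k _ (hdom t (mm-k)) _]
        rw [← hstep t (mm-k)]
      calc c (t+1) (mm+1) = D ⟨c (t+1) mm, hdom (t+1) mm⟩ := hstep (t+1) mm
        _ = D (∑ k ∈ Finset.range (mm+1), y k) := by rw [hsum]
        _ = ∑ k ∈ Finset.range (mm+1), D (y k) := map_sum D.toFun y (Finset.range (mm+1))
        _ = ∑ k ∈ Finset.range (mm+1),
              (mm.choose k : ℂ) • (u (k+1) (c t (mm-k)) + u k (c t (mm-k+1))) :=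
            Finset.sum_congr rfl fun k _ => hDy k
        _ = ∑ k ∈ Finset.range (mm+2), (((mm+1).choose k : ℂ)) • u k (c t (mm+1-k)) :=
            pascal_shuffle (fun k j => u k (c t j)) mm
  set M1 : ℝ := ‖u 1‖ with hM1def
  have hM1 : 0 ≤ M1 := norm_nonneg _
  have hUtiso : ∀ (t : ℕ) (x : H), ‖(U^t) x‖ = ‖x‖ := fun t x =>
    ContinuousLinearMap.norm_map_of_mem_unitary (pow_mem hU t) x
  have hc0norm : ∀ t, ‖c t 0‖ = 1 := by
    intro t; rw [hc0, hUtiso, hξ]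
  -- the basic recursive norm estimate
  have hrec : ∀ t mm, ‖c (t+1) mm‖ ≤ ‖c t mm‖ +
      ∑ k ∈ Finset.range mm, ((mm.choose (k+1) : ℝ) * ‖u (k+1)‖ * ‖c t (mm-(k+1))‖) := by
    intro t mm
    rw [leib t mm, Finset.sum_range_succ'
      (fun k => ((mm.choose k : ℂ)) • u k (c t (mm-k))) mm]
    refine le_trans (norm_add_le _ _) ?_
    rw [add_comm]
    apply add_le_add
    · simp [hu0, ContinuousLinearMap.norm_map_of_mem_unitary hU]
    · refine le_trans (norm_sum_le _ _) (Finset.sum_le_sum ?_)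
      intro k _
      rw [norm_smul]
      simp only [Complex.norm_natCast]
      rw [mul_assoc]
      exact mul_le_mul_of_nonneg_left ((u (k+1)).le_opNorm _) (by positivity)
  -- the key polynomial bound
  have key : ∀ n : ℕ, ∃ K : ℝ, 0 ≤ K ∧ ∀ j : ℕ, 1 ≤ j → j ≤ n → ∀ t : ℕ,
      ‖c t j‖ ≤ M1^j * (t:ℝ)^j + K * ((t:ℝ)+1)^(j-1) := by
    intro n
    induction n with
    | zero => exact ⟨0, le_refl 0, fun j h1 h2 t => absurd (le_trans h1 h2) (by omega)⟩
    | succ n ihn =>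
      obtain ⟨K, hK, hKb⟩ := ihn
      by_cases hn : n = 0
      · subst hn
        refine ⟨K + ‖c 0 1‖, by positivity, ?_⟩
        intro j h1 h2 t
        have hj : j = 1 := by omega
        subst hj
        simp only [pow_one, Nat.sub_self, pow_zero, mul_one]
        induction t with
        | zero => simpa using hK
        | succ t iht =>
          have h3 := hrec t 1
          simp only [Finset.range_one, Finset.sum_singleton, zero_add, Nat.choose_self,
            Nat.cast_one, one_mul, Nat.sub_self, hc0norm, mul_one] at h3
          rw [← hM1def] at h3
          push_cast
          push_cast at iht
          nlinarith [h3, iht]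
      · -- n ≥ 1
        have hn1 : 1 ≤ n := by omega
        set L : ℝ := ∑ k ∈ Finset.range (n+1),
          ((n+1).choose (k+1) : ℝ) * ‖u (k+1)‖ * (M1^(n-k) + K) with hLdef
        have hL : 0 ≤ L := Finset.sum_nonneg (fun k _ => by positivity)
        refine ⟨K + (‖c 0 (n+1)‖ + L), by positivity, ?_⟩
        intro j h1 h2 t
        rcases Nat.lt_or_ge j (n+1) with hj | hj
        · refine le_trans (hKb j h1 (by omega) t) ?_
          have h4 : (0:ℝ) ≤ ((t:ℝ)+1)^(j-1) := by positivity
          nlinarith [norm_nonneg (c 0 (n+1)), hL]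
        · have hj' : j = n+1 := by omega
          subst hj'
          have incr : ∀ s : ℕ, ‖c (s+1) (n+1)‖ ≤ ‖c s (n+1)‖ +
              (((n:ℝ)+1) * M1^(n+1) * (s:ℝ)^n + L * ((s:ℝ)+1)^(n-1)) := by
            intro s
            refine le_trans (hrec s (n+1)) (add_le_add le_rfl ?_)
            have hterm : ∀ k ∈ Finset.range (n+1),
                ((n+1).choose (k+1) : ℝ) * ‖u (k+1)‖ * ‖c s (n+1-(k+1))‖ ≤
                (if k = 0 then ((n:ℝ)+1) * M1^(n+1) * (s:ℝ)^n else 0)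
                  + ((n+1).choose (k+1) : ℝ) * ‖u (k+1)‖ * (M1^(n-k) + K) * ((s:ℝ)+1)^(n-1) := by
              intro k hk
              have hkn : k ≤ n := by
                have := Finset.mem_range.mp hk; omega
              have hs0 : (0:ℝ) ≤ (s:ℝ) := Nat.cast_nonneg s
              have hone : (1:ℝ) ≤ ((s:ℝ)+1)^(n-1) := one_le_pow₀ (by linarith)
              rcases Nat.eq_zero_or_pos k with hk0 | hk1
              · subst hk0

                simp only [zero_add, if_pos rfl, Nat.choose_one_right, Nat.add_sub_cancel,
                  Nat.sub_zero]
                rw [← hM1def]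
                have hb := hKb n hn1 le_rfl s
                have e1 : ((n:ℝ)+1) * M1 * ‖c s n‖
                    ≤ ((n:ℝ)+1) * M1 * (M1^n * (s:ℝ)^n + K * ((s:ℝ)+1)^(n-1)) := by
                  apply mul_le_mul_of_nonneg_left hb (by positivity)
                push_cast
                have e2 : (0:ℝ) ≤ ((n:ℝ)+1)*M1*M1^n*((s:ℝ)+1)^(n-1) := by positivity
                rw [pow_succ]
                nlinarith [e1, e2]
              · have hif : (if k = 0 then ((n:ℝ)+1) * M1^(n+1) * (s:ℝ)^n else 0) = 0 :=
                  if_neg (by omega)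
                rw [hif, zero_add]
                have hidx : n+1-(k+1) = n-k := by omega
                rw [hidx]
                have hcb : ‖c s (n-k)‖ ≤ (M1^(n-k) + K) * ((s:ℝ)+1)^(n-1) := by
                  rcases Nat.eq_zero_or_pos (n-k) with hz | hpos
                  · rw [hz, hc0norm, pow_zero]
                    nlinarith [hone, hK]
                  · have hb := hKb (n-k) hpos (by omega) s
                    have e1 : (s:ℝ)^(n-k) ≤ ((s:ℝ)+1)^(n-1) := by
                      calc (s:ℝ)^(n-k) ≤ ((s:ℝ)+1)^(n-k) :=
                            pow_le_pow_left₀ hs0 (by linarith) _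
                        _ ≤ ((s:ℝ)+1)^(n-1) := pow_le_pow_right₀ (by linarith) (by omega)
                    have e2 : ((s:ℝ)+1)^(n-k-1) ≤ ((s:ℝ)+1)^(n-1) :=
                      pow_le_pow_right₀ (by linarith) (by omega)
                    have e3 : (0:ℝ) ≤ M1^(n-k) := by positivity
                    nlinarith [hb, e1, e2, hK, e3]
                calc ((n+1).choose (k+1) : ℝ) * ‖u (k+1)‖ * ‖c s (n-k)‖
                    ≤ ((n+1).choose (k+1) : ℝ) * ‖u (k+1)‖ * ((M1^(n-k) + K) * ((s:ℝ)+1)^(n-1)) :=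
                      mul_le_mul_of_nonneg_left hcb (by positivity)
                  _ = ((n+1).choose (k+1) : ℝ) * ‖u (k+1)‖ * (M1^(n-k) + K) * ((s:ℝ)+1)^(n-1) := by
                      ring
            calc ∑ k ∈ Finset.range (n+1), ((n+1).choose (k+1) : ℝ) * ‖u (k+1)‖ * ‖c s (n+1-(k+1))‖
                ≤ ∑ k ∈ Finset.range (n+1),
                    ((if k = 0 then ((n:ℝ)+1) * M1^(n+1) * (s:ℝ)^n else 0)
                      + ((n+1).choose (k+1) : ℝ) * ‖u (k+1)‖ * (M1^(n-k) + K) * ((s:ℝ)+1)^(n-1)) :=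
                  Finset.sum_le_sum hterm
              _ = ((n:ℝ)+1) * M1^(n+1) * (s:ℝ)^n + L * ((s:ℝ)+1)^(n-1) := by
                  rw [Finset.sum_add_distrib]
                  congr 1
                  · rw [Finset.sum_ite_eq' (Finset.range (n+1)) 0
                      (fun _ => ((n:ℝ)+1) * M1^(n+1) * (s:ℝ)^n)]
                    simp
                  · rw [hLdef, Finset.sum_mul]
          have tele : ∀ T : ℕ, ‖c T (n+1)‖ ≤ ‖c 0 (n+1)‖ +
              ∑ s ∈ Finset.range T, (((n:ℝ)+1) * M1^(n+1) * (s:ℝ)^n + L * ((s:ℝ)+1)^(n-1)) := by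
            intro T
            induction T with
            | zero => simp
            | succ T ihT =>
              rw [Finset.sum_range_succ]
              have := incr T
              linarith
          have hs1 : ((n:ℝ)+1) * ∑ s ∈ Finset.range t, (s:ℝ)^n ≤ (t:ℝ)^(n+1) := by
            exact_mod_cast aux_sum_pow_le t n
          have hs2 : ∑ s ∈ Finset.range t, ((s:ℝ)+1)^(n-1) ≤ (t:ℝ)^n := by
            calc ∑ s ∈ Finset.range t, ((s:ℝ)+1)^(n-1)
                ≤ ∑ _s ∈ Finset.range t, (t:ℝ)^(n-1) := by
                  apply Finset.sum_le_sum
                  intro s hs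
                  have hst : s + 1 ≤ t := Finset.mem_range.mp hs
                  have : (s:ℝ)+1 ≤ (t:ℝ) := by exact_mod_cast hst
                  exact pow_le_pow_left₀ (by positivity) this _
              _ = (t:ℝ) * (t:ℝ)^(n-1) := by
                  rw [Finset.sum_const, Finset.card_range, nsmul_eq_mul]
              _ = (t:ℝ)^n := by
                  rw [← pow_succ']
                  congr 1
                  omega
          have hfin := tele t
          rw [Finset.sum_add_distrib, ← Finset.mul_sum, ← Finset.mul_sum] at hfin
          simp only [Nat.add_sub_cancel]
          have e1 : M1^(n+1) * (((n:ℝ)+1) * ∑ s ∈ Finset.range t, (s:ℝ)^n)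
              ≤ M1^(n+1) * (t:ℝ)^(n+1) := mul_le_mul_of_nonneg_left hs1 (by positivity)
          have e2 : L * ∑ s ∈ Finset.range t, ((s:ℝ)+1)^(n-1) ≤ L * (t:ℝ)^n :=
            mul_le_mul_of_nonneg_left hs2 hL
          have e3 : (t:ℝ)^n ≤ ((t:ℝ)+1)^n :=
            pow_le_pow_left₀ (by positivity) (by linarith [Nat.cast_nonneg (α := ℝ) t]) n
          have e4 : (1:ℝ) ≤ ((t:ℝ)+1)^n :=
            one_le_pow₀ (by linarith [Nat.cast_nonneg (α := ℝ) t])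
          have e5 : (0:ℝ) ≤ ‖c 0 (n+1)‖ := norm_nonneg _
          nlinarith [hfin, e1, e2, e3, e4, e5, hK, hL]
  -- conclusion
  obtain ⟨K, hK, hKb⟩ := key m
  have hbound := fun t => hKb m hm le_rfl t
  have hf : ∀ᶠ t : ℕ in atTop,
      |∫ v, v^m ∂(p t)| ≤ M1^m + K * 2^(m-1) * (1/(t:ℝ)) := by
    filter_upwards [eventually_ge_atTop 1] with t ht
    have ht0 : 0 < t := ht
    have ht1 : (1:ℝ) ≤ (t:ℝ) := by exact_mod_cast ht
    have htpos : (0:ℝ) < (t:ℝ) := by linarith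
    have htm : (0:ℝ) < (t:ℝ)^m := by positivity
    rw [hmom t m ht0]
    have h1 : |(⟪(((t:ℝ)^m)⁻¹ : ℝ) • c t m, (U^t) ξ⟫_ℂ).re| ≤ ((t:ℝ)^m)⁻¹ * ‖c t m‖ := by
      refine le_trans (Complex.abs_re_le_norm _) ?_
      refine le_trans (norm_inner_le_norm _ _) ?_
      rw [norm_smul, hUtiso, hξ, mul_one]
      simp [abs_of_pos (inv_pos.mpr htm)]
    refine le_trans h1 ?_
    have h2 : ((t:ℝ)^m)⁻¹ * ‖c t m‖ ≤ ((t:ℝ)^m)⁻¹ * (M1^m * (t:ℝ)^m + K * ((t:ℝ)+1)^(m-1)) :=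
      mul_le_mul_of_nonneg_left (hbound t) (by positivity)
    refine le_trans h2 ?_
    have h3 : ((t:ℝ)+1)^(m-1) ≤ 2^(m-1) * (t:ℝ)^(m-1) := by
      rw [← mul_pow]
      exact pow_le_pow_left₀ (by linarith) (by linarith) _
    have h4 : (t:ℝ)^(m-1) * (t:ℝ) = (t:ℝ)^m := by
      rw [← pow_succ]
      congr 1
      omega
    rw [mul_add, mul_comm (((t:ℝ)^m)⁻¹), mul_assoc, mul_inv_cancel₀ (ne_of_gt htm), mul_one]
    have h5 : K * ((t:ℝ)+1)^(m-1) * (t:ℝ) ≤ K * 2^(m-1) * (t:ℝ)^m := by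
      calc K * ((t:ℝ)+1)^(m-1) * (t:ℝ) ≤ K * (2^(m-1) * (t:ℝ)^(m-1)) * (t:ℝ) := by
            have := mul_le_mul_of_nonneg_left h3 hK
            nlinarith
        _ = K * 2^(m-1) * ((t:ℝ)^(m-1) * (t:ℝ)) := by ring
        _ = K * 2^(m-1) * (t:ℝ)^m := by rw [h4]
    have h6 : ((t:ℝ)^m)⁻¹ * (K * ((t:ℝ)+1)^(m-1)) ≤ K * 2^(m-1) * (1/(t:ℝ)) := by
      rw [mul_comm, ← div_eq_mul_inv, mul_one_div, div_le_div_iff₀ htm htpos]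
      exact h5
    linarith
  have hg : Tendsto (fun t : ℕ => M1^m + K*2^(m-1)*(1/(t:ℝ))) atTop (nhds (M1^m)) := by
    have h0 : Tendsto (fun t : ℕ => 1/(t:ℝ)) atTop (nhds 0) :=
      tendsto_one_div_atTop_nhds_zero_nat
    have h1 := (h0.const_mul (K*2^(m-1))).const_add (M1^m)
    simpa using h1
  have cb : IsCoboundedUnder (· ≤ ·) atTop (fun t : ℕ => |∫ v, v^m ∂(p t)|) :=
    Filter.isCoboundedUnder_le_of_le atTop (fun t => abs_nonneg _)
  calc limsup (fun t : ℕ => |∫ v, v^m ∂(p t)|) atTop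
      ≤ limsup (fun t : ℕ => M1^m + K*2^(m-1)*(1/(t:ℝ))) atTop :=
        limsup_le_limsup hf cb hg.isBoundedUnder_le
    _ = M1^m := hg.limsup_eq
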